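/- The CLUB upper bound on conditional mutual information specialized to the true conditional distribution: for discrete random variables X, Y, Z, I(X ; Y | Z) ≤ E_{p(x,y,z)}[log p(x | y, z)] − E_{p(x,z) p(y|z)}[log p(x | y, z)], where in the second expectation Y is drawn independently of X given Z from its conditional marginal. -/

import Mathlib

open scoped Classical BigOperators

/-- `μ` is a probability mass function on the finite sample space `Ω`. -/
def IsPMF {Ω : Type*} [Fintype Ω] (μ : Ω → ℝ) : Prop :=
  (∀ ω, 0 ≤ μ ω) ∧ ∑ ω, μ ω = 1

/-- Probability that the random variable `X` takes value `x` under `μ`. -/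
noncomputable def pmass {Ω : Type*} [Fintype Ω] {α : Type*} (μ : Ω → ℝ) (X : Ω → α) (x : α) : ℝ :=
  ∑ ω, if X ω = x then μ ω else 0

/-- Shannon entropy of `X` under `μ` (with the convention `0 * log 0 = 0`). -/
noncomputable def H {Ω : Type*} [Fintype Ω] {α : Type*} [Fintype α]
    (μ : Ω → ℝ) (X : Ω → α) : ℝ :=
  - ∑ x : α, pmass μ X x * Real.log (pmass μ X x)

/-- Conditional Shannon entropy `H(X | Z) = H(X, Z) - H(Z)`. -/
noncomputable def condH {Ω : Type*} [Fintype Ω] {α β : Type*} [Fintype α] [Fintype β]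
    (μ : Ω → ℝ) (X : Ω → α) (Z : Ω → β) : ℝ :=
  H μ (fun ω => (X ω, Z ω)) - H μ Z

/-- Conditional mutual information `I(X ; Y | Z) = H(X | Z) - H(X | Y, Z)`. -/
noncomputable def condMI {Ω : Type*} [Fintype Ω] {α β γ : Type*} [Fintype α] [Fintype β] [Fintype γ]
    (μ : Ω → ℝ) (X : Ω → α) (Y : Ω → β) (Z : Ω → γ) : ℝ :=
  condH μ X Z - condH μ X (fun ω => (Y ω, Z ω))


/-- Summing a pair-pmass over the first coordinate gives the pmass of the second. -/
lemma pmass_pair_snd {Ω : Type*} [Fintype Ω] {α β : Type*} [Fintype α]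
    (μ : Ω → ℝ) (A : Ω → α) (B : Ω → β) (b : β) :
    ∑ a : α, pmass μ (fun ω => (A ω, B ω)) (a, b) = pmass μ B b := by
  unfold pmass
  rw [Finset.sum_comm]
  refine Finset.sum_congr rfl fun ω _ => ?_
  by_cases h : B ω = b
  · simp [Prod.ext_iff, h]
  · simp [Prod.ext_iff, h]

/-- Summing a triple-pmass over the middle coordinate. -/
lemma pmass_triple_mid {Ω : Type*} [Fintype Ω] {α β γ : Type*} [Fintype β]
    (μ : Ω → ℝ) (A : Ω → α) (B : Ω → β) (C : Ω → γ) (a : α) (c : γ) :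
    ∑ b : β, pmass μ (fun ω => (A ω, B ω, C ω)) (a, b, c)
      = pmass μ (fun ω => (A ω, C ω)) (a, c) := by
  unfold pmass
  rw [Finset.sum_comm]
  refine Finset.sum_congr rfl fun ω _ => ?_
  by_cases h : A ω = a ∧ C ω = c
  · simp [Prod.ext_iff, h.1, h.2]
  · rw [not_and_or] at h
    rcases h with h | h <;> simp [Prod.ext_iff, h]

/-- The core analytic inequality behind the CLUB bound. -/
lemma club_key {α β γ : Type*} [Fintype α] [Fintype β] [Fintype γ] [Nonempty β]
    (p3 : α → β → γ → ℝ) (pxz : α → γ → ℝ) (pyz : β → γ → ℝ) (pz : γ → ℝ)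
    (h3 : ∀ x y z, 0 < p3 x y z)
    (hyzpos : ∀ y z, 0 < pyz y z)
    (hzpos : ∀ z, 0 < pz z)
    (hxz : ∀ x z, ∑ y, p3 x y z = pxz x z)
    (hz : ∀ z, ∑ y, pyz y z = pz z)
    (hxpz : ∀ z, ∑ x, pxz x z = pz z) :
    -(∑ x, ∑ z, pxz x z * Real.log (pxz x z)) + ∑ z, pz z * Real.log (pz z) ≤
      -(∑ x, ∑ y, ∑ z, pxz x z * (pyz y z / pz z) * Real.log (p3 x y z / pyz y z)) := by
  have hxzpos : ∀ x z, 0 < pxz x z := fun x z => by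
    rw [← hxz x z]
    exact Finset.sum_pos (fun y _ => h3 x y z) Finset.univ_nonempty
  have hS : (∑ x, ∑ y, ∑ z, pxz x z * (pyz y z / pz z) * Real.log (p3 x y z / pyz y z))
      = ∑ x, ∑ z, pxz x z * ∑ y, (pyz y z / pz z) * Real.log (p3 x y z / pyz y z) := by
    refine Finset.sum_congr rfl fun x _ => ?_
    rw [Finset.sum_comm]
    refine Finset.sum_congr rfl fun z _ => ?_
    rw [Finset.mul_sum]
    exact Finset.sum_congr rfl fun y _ => by ring
  have jensen : ∀ x z, ∑ y, (pyz y z / pz z) * Real.log (p3 x y z / pyz y z)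
      ≤ Real.log (pxz x z / pz z) := by
    intro x z
    have hcpos : 0 < pxz x z / pz z := div_pos (hxzpos x z) (hzpos z)
    have hw1 : ∑ y, pyz y z / pz z = 1 := by
      rw [← Finset.sum_div, hz, div_self (hzpos z).ne']
    have hu1 : ∑ y, (pyz y z / pz z) * (p3 x y z / pyz y z / (pxz x z / pz z)) = 1 := by
      have h1 : ∀ y, (pyz y z / pz z) * (p3 x y z / pyz y z / (pxz x z / pz z))
          = p3 x y z / pxz x z := by
        intro y
        have a1 := (hyzpos y z).ne'
        have a2 := (hzpos z).ne'
        have a3 := (hxzpos x z).ne'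
        field_simp
      rw [Finset.sum_congr rfl fun y _ => h1 y, ← Finset.sum_div, hxz,
        div_self (hxzpos x z).ne']
    calc ∑ y, (pyz y z / pz z) * Real.log (p3 x y z / pyz y z)
        = ∑ y, ((pyz y z / pz z) * Real.log (p3 x y z / pyz y z / (pxz x z / pz z))
            + (pyz y z / pz z) * Real.log (pxz x z / pz z)) := by
          refine Finset.sum_congr rfl fun y _ => ?_
          rw [Real.log_div (div_pos (h3 x y z) (hyzpos y z)).ne' hcpos.ne']
          ring
      _ = (∑ y, (pyz y z / pz z) * Real.log (p3 x y z / pyz y z / (pxz x z / pz z)))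
            + (∑ y, pyz y z / pz z) * Real.log (pxz x z / pz z) := by
          rw [Finset.sum_add_distrib, Finset.sum_mul]
      _ ≤ (∑ y, (pyz y z / pz z) * (p3 x y z / pyz y z / (pxz x z / pz z) - 1))
            + 1 * Real.log (pxz x z / pz z) := by
          rw [hw1]
          refine add_le_add (Finset.sum_le_sum fun y _ => ?_) le_rfl
          exact mul_le_mul_of_nonneg_left
            (Real.log_le_sub_one_of_pos
              (div_pos (div_pos (h3 x y z) (hyzpos y z)) hcpos))
            (le_of_lt (div_pos (hyzpos y z) (hzpos z)))
      _ = Real.log (pxz x z / pz z) := by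
          have hsplit : ∑ y, (pyz y z / pz z) * (p3 x y z / pyz y z / (pxz x z / pz z) - 1)
              = (∑ y, (pyz y z / pz z) * (p3 x y z / pyz y z / (pxz x z / pz z)))
                - ∑ y, pyz y z / pz z := by
            rw [← Finset.sum_sub_distrib]
            exact Finset.sum_congr rfl fun y _ => by ring
          rw [hsplit, hu1, hw1]
          ring
  have main : ∑ x, ∑ z, pxz x z * ∑ y, (pyz y z / pz z) * Real.log (p3 x y z / pyz y z)
      ≤ ∑ x, ∑ z, pxz x z * Real.log (pxz x z / pz z) :=
    Finset.sum_le_sum fun x _ => Finset.sum_le_sum fun z _ =>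
      mul_le_mul_of_nonneg_left (jensen x z) (hxzpos x z).le
  have h2 : ∑ x, ∑ z, pxz x z * Real.log (pz z) = ∑ z, pz z * Real.log (pz z) := by
    rw [Finset.sum_comm]
    exact Finset.sum_congr rfl fun z _ => by rw [← Finset.sum_mul, hxpz]
  have hfin : ∑ x, ∑ z, pxz x z * Real.log (pxz x z / pz z)
      = (∑ x, ∑ z, pxz x z * Real.log (pxz x z)) - ∑ z, pz z * Real.log (pz z) := by
    calc ∑ x, ∑ z, pxz x z * Real.log (pxz x z / pz z)
        = ∑ x, ∑ z, (pxz x z * Real.log (pxz x z) - pxz x z * Real.log (pz z)) := by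
          refine Finset.sum_congr rfl fun x _ => Finset.sum_congr rfl fun z _ => ?_
          rw [Real.log_div (hxzpos x z).ne' (hzpos z).ne']
          ring
      _ = (∑ x, ∑ z, pxz x z * Real.log (pxz x z))
            - ∑ x, ∑ z, pxz x z * Real.log (pz z) := by
          rw [← Finset.sum_sub_distrib]
          exact Finset.sum_congr rfl fun x _ => Finset.sum_sub_distrib _ _
      _ = _ := by rw [h2]
  rw [hS]
  linarith [main, hfin]

/-- The CLUB upper bound on conditional mutual information, specialized to the true
conditional distribution: `I(X ; Y | Z)` is at most the difference between the expected
conditional log-likelihood `log p(x | y, z)` under the joint distribution `p(x, y, z)`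
and under the distribution `p(x, z) p(y | z)` where `Y` is resampled independently of
`X` given `Z`. -/
theorem condMI_le_CLUB {Ω : Type*} [Fintype Ω]
    {α β γ : Type*} [Fintype α] [Fintype β] [Fintype γ]
    (μ : Ω → ℝ) (hμ : IsPMF μ)
    (X : Ω → α) (Y : Ω → β) (Z : Ω → γ)
    (hpos : ∀ x y z, 0 < pmass μ (fun ω => (X ω, Y ω, Z ω)) (x, y, z)) :
    condMI μ X Y Z ≤
      (∑ x : α, ∑ y : β, ∑ z : γ,
          pmass μ (fun ω => (X ω, Y ω, Z ω)) (x, y, z) *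
            Real.log (pmass μ (fun ω => (X ω, Y ω, Z ω)) (x, y, z)
              / pmass μ (fun ω => (Y ω, Z ω)) (y, z)))
      - (∑ x : α, ∑ y : β, ∑ z : γ,
          pmass μ (fun ω => (X ω, Z ω)) (x, z) *
            (pmass μ (fun ω => (Y ω, Z ω)) (y, z) / pmass μ Z z) *
            Real.log (pmass μ (fun ω => (X ω, Y ω, Z ω)) (x, y, z)
              / pmass μ (fun ω => (Y ω, Z ω)) (y, z))) := by
  classical
  have hΩne : Nonempty Ω := by
    by_contra h
    haveI : IsEmpty Ω := not_nonempty_iff.mp h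
    have := hμ.2
    simp [Finset.univ_eq_empty] at this
  obtain ⟨ω0⟩ := hΩne
  haveI : Nonempty α := ⟨X ω0⟩
  haveI : Nonempty β := ⟨Y ω0⟩
  haveI : Nonempty γ := ⟨Z ω0⟩
  -- marginal identities
  have hm_x : ∀ y z, ∑ x : α, pmass μ (fun ω => (X ω, Y ω, Z ω)) (x, y, z)
      = pmass μ (fun ω => (Y ω, Z ω)) (y, z) :=
    fun y z => pmass_pair_snd μ X (fun ω => (Y ω, Z ω)) (y, z)
  have hm_y : ∀ x z, ∑ y : β, pmass μ (fun ω => (X ω, Y ω, Z ω)) (x, y, z)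
      = pmass μ (fun ω => (X ω, Z ω)) (x, z) :=
    fun x z => pmass_triple_mid μ X Y Z x z
  have hm_yz : ∀ z, ∑ y : β, pmass μ (fun ω => (Y ω, Z ω)) (y, z) = pmass μ Z z :=
    fun z => pmass_pair_snd μ Y Z z
  have hm_xz : ∀ z, ∑ x : α, pmass μ (fun ω => (X ω, Z ω)) (x, z) = pmass μ Z z :=
    fun z => pmass_pair_snd μ X Z z
  -- positivity
  have hPyz : ∀ y z, 0 < pmass μ (fun ω => (Y ω, Z ω)) (y, z) := fun y z => by
    rw [← hm_x y z]
    exact Finset.sum_pos (fun x _ => hpos x y z) Finset.univ_nonempty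
  have hPz : ∀ z, 0 < pmass μ Z z := fun z => by
    rw [← hm_yz z]
    exact Finset.sum_pos (fun y _ => hPyz y z) Finset.univ_nonempty
  -- the first sum on the RHS equals  ∑ p3 log p3  -  ∑ pyz log pyz
  have e1 : (∑ x : α, ∑ y : β, ∑ z : γ,
        pmass μ (fun ω => (X ω, Y ω, Z ω)) (x, y, z) *
          Real.log (pmass μ (fun ω => (X ω, Y ω, Z ω)) (x, y, z)
            / pmass μ (fun ω => (Y ω, Z ω)) (y, z)))
      = (∑ x : α, ∑ y : β, ∑ z : γ,
          pmass μ (fun ω => (X ω, Y ω, Z ω)) (x, y, z) *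
            Real.log (pmass μ (fun ω => (X ω, Y ω, Z ω)) (x, y, z)))
        - ∑ y : β, ∑ z : γ, pmass μ (fun ω => (Y ω, Z ω)) (y, z) *
            Real.log (pmass μ (fun ω => (Y ω, Z ω)) (y, z)) := by
    calc (∑ x : α, ∑ y : β, ∑ z : γ,
          pmass μ (fun ω => (X ω, Y ω, Z ω)) (x, y, z) *
            Real.log (pmass μ (fun ω => (X ω, Y ω, Z ω)) (x, y, z)
              / pmass μ (fun ω => (Y ω, Z ω)) (y, z)))
        = ∑ x : α, ∑ y : β, ∑ z : γ,
            (pmass μ (fun ω => (X ω, Y ω, Z ω)) (x, y, z) *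
                Real.log (pmass μ (fun ω => (X ω, Y ω, Z ω)) (x, y, z))
              - pmass μ (fun ω => (X ω, Y ω, Z ω)) (x, y, z) *
                Real.log (pmass μ (fun ω => (Y ω, Z ω)) (y, z))) := by
          refine Finset.sum_congr rfl fun x _ => Finset.sum_congr rfl fun y _ =>
            Finset.sum_congr rfl fun z _ => ?_
          rw [Real.log_div (hpos x y z).ne' (hPyz y z).ne']
          ring
      _ = (∑ x : α, ∑ y : β, ∑ z : γ,
            pmass μ (fun ω => (X ω, Y ω, Z ω)) (x, y, z) *
              Real.log (pmass μ (fun ω => (X ω, Y ω, Z ω)) (x, y, z)))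
          - ∑ x : α, ∑ y : β, ∑ z : γ,
              pmass μ (fun ω => (X ω, Y ω, Z ω)) (x, y, z) *
                Real.log (pmass μ (fun ω => (Y ω, Z ω)) (y, z)) := by
          rw [← Finset.sum_sub_distrib]
          refine Finset.sum_congr rfl fun x _ => ?_
          rw [← Finset.sum_sub_distrib]
          exact Finset.sum_congr rfl fun y _ => Finset.sum_sub_distrib _ _
      _ = _ := by
          congr 1
          rw [Finset.sum_comm]
          refine Finset.sum_congr rfl fun y _ => ?_
          rw [Finset.sum_comm]
          refine Finset.sum_congr rfl fun z _ => ?_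
          rw [← Finset.sum_mul, hm_x]
  -- the key inequality
  have kk : -(∑ x : α, ∑ z : γ, pmass μ (fun ω => (X ω, Z ω)) (x, z) *
        Real.log (pmass μ (fun ω => (X ω, Z ω)) (x, z)))
      + ∑ z : γ, pmass μ Z z * Real.log (pmass μ Z z)
      ≤ -(∑ x : α, ∑ y : β, ∑ z : γ,
          pmass μ (fun ω => (X ω, Z ω)) (x, z) *
            (pmass μ (fun ω => (Y ω, Z ω)) (y, z) / pmass μ Z z) *
            Real.log (pmass μ (fun ω => (X ω, Y ω, Z ω)) (x, y, z)
              / pmass μ (fun ω => (Y ω, Z ω)) (y, z))) :=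
    club_key (fun x y z => pmass μ (fun ω => (X ω, Y ω, Z ω)) (x, y, z))
      (fun x z => pmass μ (fun ω => (X ω, Z ω)) (x, z))
      (fun y z => pmass μ (fun ω => (Y ω, Z ω)) (y, z))
      (fun z => pmass μ Z z)
      hpos hPyz hPz hm_y hm_yz hm_xz
  simp only [condMI, condH, H, Fintype.sum_prod_type]
  linarith [e1, kk]
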